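/- Let A : Matrix (Fin n) (Fin n) ℝ be a symmetric positive definite tridiagonal matrix, i.e. A i j = 0 whenever |i − j| > 1, and suppose all sub- and super-diagonal entries are nonzero: A i (i+1) ≠ 0 for all i < n−1. Then every entry of A⁻¹ is nonzero. -/

import Mathlib

open Matrix

theorem aux7 {n : ℕ} (A : Matrix (Fin n) (Fin n) ℝ) (hA : A.PosDef)
    (htri : ∀ i j : Fin n, ((i : ℕ) + 1 < (j : ℕ) ∨ (j : ℕ) + 1 < (i : ℕ)) → A i j = 0)
    (hsup : ∀ i j : Fin n, (j : ℕ) = (i : ℕ) + 1 → A i j ≠ 0)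
    (i j : Fin n) (hij : (i : ℕ) ≤ (j : ℕ)) : A⁻¹ i j ≠ 0 := by
  intro h0
  set x : Fin n → ℝ := fun k => A⁻¹ k j with hx
  have hdet : IsUnit A.det := isUnit_iff_ne_zero.mpr (ne_of_gt hA.det_pos)
  have hmul : A * A⁻¹ = 1 := Matrix.mul_nonsing_inv A hdet
  have hAx : ∀ k, A.mulVec x k = if k = j then 1 else 0 := by
    intro k
    have h1 : A.mulVec x k = (A * A⁻¹) k j := by
      simp [Matrix.mulVec, Matrix.mul_apply, dotProduct, hx]
    rw [h1, hmul, Matrix.one_apply]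
  -- step 1 : x vanishes up to index i
  have step1 : ∀ k : Fin n, (k : ℕ) ≤ (i : ℕ) → x k = 0 := by
    set z : Fin n → ℝ := fun k => if (k : ℕ) ≤ (i : ℕ) then x k else 0 with hz
    have hAz : ∀ k : Fin n, (k : ℕ) < (i : ℕ) → A.mulVec z k = 0 := by
      intro k hk
      have h2 : A.mulVec z k = A.mulVec x k := by
        simp only [Matrix.mulVec, dotProduct]
        refine Finset.sum_congr rfl fun l _ => ?_
        by_cases hl : (l : ℕ) ≤ (i : ℕ)
        · simp only [hz]; rw [if_pos hl]
        · have hA0 : A k l = 0 := htri k l (Or.inl (by omega))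
          simp [hA0]
      rw [h2, hAx]
      have hkj : k ≠ j := by
        intro h; have := congrArg Fin.val h; omega
      simp [hkj]
    have hq : dotProduct (star z) (A.mulVec z) = 0 := by
      have hst : star z = z := by simp
      rw [hst, dotProduct]
      refine Finset.sum_eq_zero fun k _ => ?_
      rcases lt_trichotomy (k : ℕ) (i : ℕ) with hk | hk | hk
      · rw [hAz k hk, mul_zero]
      · have hki : k = i := Fin.ext hk
        have hzk : z k = 0 := by simp [hz, hki, hx, h0]
        rw [hzk, zero_mul]
      · have hzk : z k = 0 := by
          simp only [hz]; rw [if_neg (by omega)]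
        rw [hzk, zero_mul]
    have hz0 : z = 0 := by
      by_contra hne
      exact absurd hq (ne_of_gt (hA.dotProduct_mulVec_pos hne))
    intro k hk
    have hk0 := congrFun hz0 k
    simp only [hz] at hk0
    rwa [if_pos hk] at hk0
  -- step 2 : x vanishes up to index j
  have step2 : ∀ m : ℕ, m ≤ (j : ℕ) → ∀ k : Fin n, (k : ℕ) = m → x k = 0 := by
    intro m
    induction m using Nat.strong_induction_on with
    | _ m IH =>
      intro hm k hk
      by_cases hki : m ≤ (i : ℕ)
      · exact step1 k (by omega)
      · push_neg at hki
        have hjn : (j : ℕ) < n := j.isLt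
        set p : Fin n := ⟨m - 1, by omega⟩ with hp
        have hrow : A.mulVec x p = 0 := by
          rw [hAx]
          have hpj : p ≠ j := by
            intro h; have := congrArg Fin.val h; simp [hp] at this; omega
          simp [hpj]
        have hsum : A.mulVec x p = A p k * x k := by
          simp only [Matrix.mulVec, dotProduct]
          refine Finset.sum_eq_single k (fun l _ hl => ?_) (fun h => absurd (Finset.mem_univ k) h)
          rcases lt_or_ge (l : ℕ) m with hlm | hlm
          · have hxl : x l = 0 := IH (l : ℕ) hlm (by omega) l rfl
            rw [hxl, mul_zero]
          · have hlm' : m < (l : ℕ) := by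
              rcases Nat.eq_or_lt_of_le hlm with h | h
              · exact absurd (Fin.ext (h.symm.trans hk.symm) : l = k) hl
              · exact h
            have hA0 : A p l = 0 := htri p l (Or.inl (by simp [hp]; omega))
            rw [hA0, zero_mul]
        have hApk : A p k ≠ 0 := hsup p k (by simp [hp]; omega)
        have := hrow
        rw [hsum] at this
        exact (mul_eq_zero.mp this).resolve_left hApk
  have hxj : x j = 0 := step2 (j : ℕ) le_rfl j rfl
  have hxne : x ≠ 0 := by
    intro h
    have h1 := hAx j
    rw [h] at h1
    simp [Matrix.mulVec_zero] at h1
  have hpos := hA.dotProduct_mulVec_pos hxne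
  have hzero : dotProduct (star x) (A.mulVec x) = 0 := by
    have hst : star x = x := by simp
    rw [hst, dotProduct]
    refine Finset.sum_eq_zero fun k _ => ?_
    rw [hAx]
    by_cases hkj : k = j
    · simp [hkj, hxj]
    · simp [hkj]
  rw [hzero] at hpos
  exact lt_irrefl 0 hpos

theorem stmt_7 {n : ℕ} (A : Matrix (Fin n) (Fin n) ℝ) (hA : A.PosDef)
    (htri : ∀ i j : Fin n, ((i : ℕ) + 1 < (j : ℕ) ∨ (j : ℕ) + 1 < (i : ℕ)) → A i j = 0)
    (hsup : ∀ i j : Fin n, (j : ℕ) = (i : ℕ) + 1 → A i j ≠ 0) :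
    ∀ i j : Fin n, A⁻¹ i j ≠ 0 := by
  intro i j
  rcases le_total (i : ℕ) (j : ℕ) with h | h
  · exact aux7 A hA htri hsup i j h
  · have hsym : Aᵀ = A := by
      have := hA.isHermitian
      rwa [Matrix.IsHermitian, conjTranspose_eq_transpose_of_trivial] at this
    have : A⁻¹ i j = A⁻¹ j i := by
      conv_lhs => rw [← hsym, ← Matrix.transpose_nonsing_inv]
      rfl
    rw [this]
    exact aux7 A hA htri hsup j i h
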